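/- Let ∼_proc and ∼_msg be symmetric relations on a set E of events colored by n processes, where ∼_proc is an equivalence relation relating only events of the same process. Define x ∼ y iff there is a path of length at most 2n−1 alternating or arbitrary steps of ∼_proc ∪ ∼_msg from x to y. Assume the saturation condition: whenever x ∼ y and x, y have the same process color, then x ∼_proc y. Then ∼ is transitive (hence an equivalence relation). -/
import Mathlib


namespace HMSCPaper

/-- `Sim step n x y`: there is a path of length `2n - 1` (hence, by reflexivity
of the process relation, of length at most `2n - 1`) from `x` to `y` whose
steps are `step`. -/
def Sim {E : Type} (step : E → E → Prop) (n : ℕ) (x y : E) : Prop :=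
  ∃ f : ℕ → E, f 0 = x ∧ f (2 * n - 1) = y ∧ ∀ i < 2 * n - 1, step (f i) (f (i + 1))

section Aux

variable {E P : Type} [Fintype P] {n : ℕ} {c : E → P} {sp sm : E → E → Prop}

/-- Alternating path: `x = u 0`, `sp (u t) (v t)` for `t ≤ k`,
`sm (v t) (u (t+1))` for `t < k`, `v k = y`. -/
def Alt (sp sm : E → E → Prop) (k : ℕ) (x y : E) : Prop :=
  ∃ u v : ℕ → E, u 0 = x ∧ v k = y ∧ (∀ t, t ≤ k → sp (u t) (v t)) ∧
    ∀ t, t < k → sm (v t) (u (t + 1))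

/-- Pad a path of length `ℓ ≤ 2n-1` (at the end, with reflexive `sp` steps)
to a `Sim` witness. -/
lemma pad_sim (hsp_refl : ∀ x, sp x x) {ℓ : ℕ} (hℓ : ℓ ≤ 2 * n - 1)
    (g : ℕ → E) (hg : ∀ i < ℓ, sp (g i) (g (i + 1)) ∨ sm (g i) (g (i + 1))) :
    Sim (fun a b => sp a b ∨ sm a b) n (g 0) (g ℓ) := by
  refine ⟨fun i => g (min i ℓ), by simp, by simp [Nat.min_eq_right hℓ], ?_⟩
  intro i hi
  beta_reduce
  by_cases h : i < ℓ
  · have h1 : min i ℓ = i := by omega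
    have h2 : min (i + 1) ℓ = i + 1 := by omega
    simp only [h1, h2]
    exact hg i h
  · have h1 : min i ℓ = ℓ := by omega
    have h2 : min (i + 1) ℓ = ℓ := by omega
    simp only [h1, h2]
    exact Or.inl (hsp_refl _)

/-- Any path in `sp ∪ sm` can be put into alternating form. -/
lemma path_to_alt (hsp_refl : ∀ x, sp x x)
    (hsp_trans : ∀ {x y z : E}, sp x y → sp y z → sp x z) :
    ∀ (L : ℕ) (f : ℕ → E),
      (∀ i < L, sp (f i) (f (i + 1)) ∨ sm (f i) (f (i + 1))) →
      ∃ k, Alt sp sm k (f 0) (f L) := by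
  intro L
  induction L with
  | zero =>
    intro f _
    exact ⟨0, fun _ => f 0, fun _ => f 0, rfl, rfl, fun _ _ => hsp_refl _,
      fun t ht => absurd ht (by omega)⟩
  | succ L ih =>
    intro f hf
    obtain ⟨k, u, v, hu0, hvk, hsp, hsm⟩ :=
      ih (fun i => f (i + 1)) (fun i hi => hf (i + 1) (by omega))
    rcases hf 0 (by omega) with h0 | h0
    · refine ⟨k, fun t => if t = 0 then f 0 else u t, v, by simp, hvk, ?_, ?_⟩
      · intro t ht
        beta_reduce
        by_cases h : t = 0
        · subst h
          rw [if_pos rfl]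
          exact hsp_trans (show sp (f 0) (u 0) by rw [hu0]; exact h0)
            (hsp 0 (by omega))
        · rw [if_neg h]
          exact hsp t ht
      · intro t ht
        beta_reduce
        rw [if_neg (Nat.succ_ne_zero t)]
        exact hsm t ht
    · refine ⟨k + 1, fun t => if t = 0 then f 0 else u (t - 1),
        fun t => if t = 0 then f 0 else v (t - 1), by simp, ?_, ?_, ?_⟩
      · beta_reduce
        rw [if_neg (Nat.succ_ne_zero k), Nat.add_sub_cancel]
        exact hvk
      · intro t ht
        beta_reduce
        by_cases h : t = 0
        · subst h
          rw [if_pos rfl, if_pos rfl]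
          exact hsp_refl _
        · rw [if_neg h, if_neg h]
          exact hsp (t - 1) (by omega)
      · intro t ht
        beta_reduce
        by_cases h : t = 0
        · subst h
          rw [if_pos rfl, if_neg (Nat.succ_ne_zero 0)]
          show sm (f 0) (u (1 - 1))
          rw [show (1 : ℕ) - 1 = 0 from rfl, hu0]
          exact h0
        · rw [if_neg h, if_neg (Nat.succ_ne_zero t),
            show t + 1 - 1 = t - 1 + 1 by omega]
          exact hsm (t - 1) (by omega)

/-- Concatenation of alternating paths. -/
lemma alt_concat (hsp_trans : ∀ {x y z : E}, sp x y → sp y z → sp x z)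
    {k1 k2 : ℕ} {x y z : E} (h1 : Alt sp sm k1 x y) (h2 : Alt sp sm k2 y z) :
    Alt sp sm (k1 + k2) x z := by
  obtain ⟨u1, v1, hu1, hv1, hs1, hm1⟩ := h1
  obtain ⟨u2, v2, hu2, hv2, hs2, hm2⟩ := h2
  refine ⟨fun t => if t ≤ k1 then u1 t else u2 (t - k1),
          fun t => if t < k1 then v1 t else v2 (t - k1), by simp [hu1], ?_, ?_, ?_⟩
  · beta_reduce
    by_cases h : k1 + k2 < k1
    · omega
    · rw [if_neg h, show k1 + k2 - k1 = k2 by omega]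
      exact hv2
  · intro t ht
    beta_reduce
    by_cases h : t < k1
    · rw [if_pos (by omega : t ≤ k1), if_pos h]
      exact hs1 t (by omega)
    · by_cases h' : t = k1
      · subst h'
        rw [if_pos le_rfl, if_neg (by omega), Nat.sub_self]
        have h2' := hs2 0 (by omega)
        rw [hu2, ← hv1] at h2'
        exact hsp_trans (hs1 t le_rfl) h2'
      · rw [if_neg (by omega), if_neg h]
        exact hs2 (t - k1) (by omega)
  · intro t ht
    beta_reduce
    by_cases h : t < k1
    · rw [if_pos h, if_pos (by omega : t + 1 ≤ k1)]
      exact hm1 t h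
    · rw [if_neg h, if_neg (by omega : ¬t + 1 ≤ k1),
        show t + 1 - k1 = t - k1 + 1 by omega]
      exact hm2 (t - k1) (by omega)

/-- The middle segment of an alternating path, from `v s` to `u t`,
is a `Sim`-witnessable path when `t - s ≤ n`. -/
lemma alt_segment_sim (hsp_refl : ∀ x, sp x x)
    {k s t : ℕ} {u v : ℕ → E}
    (hsp : ∀ t, t ≤ k → sp (u t) (v t)) (hsm : ∀ t, t < k → sm (v t) (u (t + 1)))
    (hst : s < t) (htk : t ≤ k) (htn : t - s ≤ n) :
    Sim (fun a b => sp a b ∨ sm a b) n (v s) (u t) := by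
  have key := pad_sim (sp := sp) (sm := sm) (n := n) hsp_refl
    (ℓ := 2 * (t - s) - 1)
    (g := fun i => if i % 2 = 0 then v (s + i / 2) else u (s + i / 2 + 1))
    (by omega)
    (by
      intro i hi
      beta_reduce
      by_cases h : i % 2 = 0
      · rw [if_pos h, if_neg (show ¬(i + 1) % 2 = 0 by omega),
          show (i + 1) / 2 = i / 2 by omega]
        exact Or.inr (hsm (s + i / 2) (by omega))
      · rw [if_neg h, if_pos (show (i + 1) % 2 = 0 by omega),
          show (i + 1) / 2 = i / 2 + 1 by omega]
        exact Or.inl (hsp (s + i / 2 + 1) (by omega)))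
  have e0 : (if (0 : ℕ) % 2 = 0 then v (s + 0 / 2) else u (s + 0 / 2 + 1)) = v s := by
    norm_num
  have e1 : (if (2 * (t - s) - 1) % 2 = 0 then v (s + (2 * (t - s) - 1) / 2)
      else u (s + (2 * (t - s) - 1) / 2 + 1)) = u t := by
    rw [if_neg (show ¬(2 * (t - s) - 1) % 2 = 0 by omega),
      show s + (2 * (t - s) - 1) / 2 + 1 = t by omega]
  beta_reduce at key
  rwa [e0, e1] at key

/-- An alternating path with at most `n - 1` message steps yields `Sim`. -/
lemma alt_to_sim (hsp_refl : ∀ x, sp x x) (hn1 : 1 ≤ n)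
    {k : ℕ} {x y : E} (hk : k ≤ n - 1) (h : Alt sp sm k x y) :
    Sim (fun a b => sp a b ∨ sm a b) n x y := by
  obtain ⟨u, v, hu0, hvk, hsp, hsm⟩ := h
  have key := pad_sim (sp := sp) (sm := sm) (n := n) hsp_refl
    (ℓ := 2 * k + 1)
    (g := fun i => if i % 2 = 0 then u (i / 2) else v (i / 2))
    (by omega)
    (by
      intro i hi
      beta_reduce
      by_cases h : i % 2 = 0
      · rw [if_pos h, if_neg (show ¬(i + 1) % 2 = 0 by omega),
          show (i + 1) / 2 = i / 2 by omega]
        exact Or.inl (hsp (i / 2) (by omega))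
      · rw [if_neg h, if_pos (show (i + 1) % 2 = 0 by omega),
          show (i + 1) / 2 = i / 2 + 1 by omega]
        exact Or.inr (hsm (i / 2) (by omega)))
  have e0 : (if (0 : ℕ) % 2 = 0 then u (0 / 2) else v (0 / 2)) = x := by
    norm_num [hu0]
  have e1 : (if (2 * k + 1) % 2 = 0 then u ((2 * k + 1) / 2)
      else v ((2 * k + 1) / 2)) = y := by
    rw [if_neg (show ¬(2 * k + 1) % 2 = 0 by omega),
      show (2 * k + 1) / 2 = k by omega]
    exact hvk
  beta_reduce at key
  rwa [e0, e1] at key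

/-- Shortening: an alternating path with at least `n` message steps can be
shortened, using pigeonhole on the processes of the blocks and saturation. -/
lemma alt_shorten (hn : Fintype.card P = n)
    (hsp_refl : ∀ x, sp x x)
    (hsp_trans : ∀ {x y z : E}, sp x y → sp y z → sp x z)
    (hsp_proc : ∀ {x y : E}, sp x y → c x = c y)
    (hsat : ∀ x y, Sim (fun a b => sp a b ∨ sm a b) n x y → c x = c y → sp x y)
    {k : ℕ} {x y : E} (hk : n ≤ k) (h : Alt sp sm k x y) :
    ∃ k' < k, Alt sp sm k' x y := by
  obtain ⟨u, v, hu0, hvk, hsp, hsm⟩ := h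
  obtain ⟨a, b, hab, hcab⟩ := Fintype.exists_ne_map_eq_of_card_lt
    (fun i : Fin (n + 1) => c (u i)) (by rw [hn]; simp)
  obtain ⟨s, t, hst, htn, hcst⟩ :
      ∃ s t : ℕ, s < t ∧ t ≤ n ∧ c (u s) = c (u t) := by
    rcases lt_or_gt_of_ne (fun h' : (a : ℕ) = (b : ℕ) => hab (Fin.ext h')) with h' | h'
    · exact ⟨a, b, h', by omega, hcab⟩
    · exact ⟨b, a, h', by omega, hcab.symm⟩
  have htk : t ≤ k := le_trans htn hk
  have hsim := alt_segment_sim (n := n) hsp_refl hsp hsm hst htk (by omega)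
  have hcv : c (v s) = c (u t) := by
    rw [← hsp_proc (hsp s (by omega))]; exact hcst
  have spst : sp (v s) (u t) := hsat _ _ hsim hcv
  refine ⟨k - (t - s), by omega,
    fun r => if r ≤ s then u r else u (r + (t - s)),
    fun r => if r < s then v r else v (r + (t - s)), by simp [hu0], ?_, ?_, ?_⟩
  · beta_reduce
    rw [if_neg (show ¬k - (t - s) < s by omega),
      show k - (t - s) + (t - s) = k by omega]
    exact hvk
  · intro r hr
    beta_reduce
    by_cases h1 : r < s
    · rw [if_pos (show r ≤ s by omega), if_pos h1]
      exact hsp r (by omega)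
    · by_cases h2 : r = s
      · subst h2
        rw [if_pos le_rfl, if_neg (show ¬r < r by omega),
          show r + (t - r) = t by omega]
        exact hsp_trans (hsp r (by omega)) (hsp_trans spst (hsp t htk))
      · rw [if_neg (show ¬r ≤ s by omega), if_neg h1]
        exact hsp (r + (t - s)) (by omega)
  · intro r hr
    beta_reduce
    by_cases h1 : r < s
    · rw [if_pos h1, if_pos (show r + 1 ≤ s by omega)]
      exact hsm r (by omega)
    · rw [if_neg h1, if_neg (show ¬r + 1 ≤ s by omega),
        show r + 1 + (t - s) = r + (t - s) + 1 by omega]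
      exact hsm (r + (t - s)) (by omega)

/-- Repeated shortening brings any alternating path down to at most `n - 1`
message steps. -/
lemma alt_reduce (hn : Fintype.card P = n)
    (hsp_refl : ∀ x, sp x x)
    (hsp_trans : ∀ {x y z : E}, sp x y → sp y z → sp x z)
    (hsp_proc : ∀ {x y : E}, sp x y → c x = c y)
    (hsat : ∀ x y, Sim (fun a b => sp a b ∨ sm a b) n x y → c x = c y → sp x y) :
    ∀ (k : ℕ) (x y : E), Alt sp sm k x y → ∃ k' ≤ n - 1, Alt sp sm k' x y := by
  intro k
  induction k using Nat.strong_induction_on with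
  | _ k ih =>
    intro x y h
    by_cases hk : k ≤ n - 1
    · exact ⟨k, hk, h⟩
    · obtain ⟨k', hk', h'⟩ :=
        alt_shorten hn hsp_refl @hsp_trans @hsp_proc hsat (by omega) h
      exact ih k' hk' x y h'

end Aux

/-- let `sp` (∼_proc) be an equivalence relation relating only
events of the same process, `sm` (∼_msg) a symmetric relation, and `∼` the
relation "joined by a path of length at most `2n − 1` in `sp ∪ sm`" where `n`
is the number of processes. If `∼` is saturated (x ∼ y on the same process
implies x ∼_proc y), then `∼` is transitive (hence an equivalence relation). -/
theorem sim_transitive {E P : Type} [Fintype P] (n : ℕ) (hn : Fintype.card P = n)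
    (hn1 : 1 ≤ n) (c : E → P) (sp sm : E → E → Prop)
    (hsp_refl : ∀ x, sp x x) (hsp_symm : ∀ {x y}, sp x y → sp y x)
    (hsp_trans : ∀ {x y z}, sp x y → sp y z → sp x z)
    (hsp_proc : ∀ {x y}, sp x y → c x = c y)
    (hsm_symm : ∀ {x y}, sm x y → sm y x)
    (hsat : ∀ x y, Sim (fun a b => sp a b ∨ sm a b) n x y → c x = c y → sp x y) :
    ∀ x y z, Sim (fun a b => sp a b ∨ sm a b) n x y →
      Sim (fun a b => sp a b ∨ sm a b) n y z →
      Sim (fun a b => sp a b ∨ sm a b) n x z := by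
  intro x y z hxy hyz
  obtain ⟨f, hf0, hfL, hf⟩ := hxy
  obtain ⟨g, hg0, hgL, hg⟩ := hyz
  obtain ⟨k1, h1⟩ := path_to_alt (sm := sm) hsp_refl @hsp_trans (2 * n - 1) f hf
  obtain ⟨k2, h2⟩ := path_to_alt (sm := sm) hsp_refl @hsp_trans (2 * n - 1) g hg
  rw [hf0, hfL] at h1
  rw [hg0, hgL] at h2
  have h3 := alt_concat @hsp_trans h1 h2
  obtain ⟨k', hk', h4⟩ :=
    alt_reduce hn hsp_refl @hsp_trans @hsp_proc hsat (k1 + k2) x z h3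
  exact alt_to_sim hsp_refl hn1 hk' h4

end HMSCPaper
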